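/- Conversely, if S is a commutative semiring such that on every finite set X, every partial order is observationally equivalent to an S-linear combination of total orders (with respect to the compatibility pairing), then 1 + 1 = 1 in S. -/

import Mathlib

/-- Two relations are compatible when the transitive closure of their union is
antisymmetric (i.e. the union is acyclic). -/
def Compatible {X : Type*} (r s : X → X → Prop) : Prop :=
  ∀ a b : X, Relation.TransGen (fun u v => r u v ∨ s u v) a b →
    Relation.TransGen (fun u v => r u v ∨ s u v) b a → a = b

open Classical in
/-- The compatibility pairing with values in a commutative semiring. -/
noncomputable def bracket {X : Type*} (S : Type*) [CommSemiring S]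
    (r s : X → X → Prop) : S :=
  if Compatible r s then 1 else 0

lemma compat_of {X : Type*} {r s t : X → X → Prop} (htr : Transitive t)
    (hanti : ∀ a b, t a b → t b a → a = b)
    (hr : ∀ a b, r a b → t a b) (hs : ∀ a b, s a b → t a b) : Compatible r s := by
  intro a b hab hba
  have he := @Relation.transGen_eq_self _ t ⟨htr⟩
  have hab' : t a b := by
    have := Relation.TransGen.mono (fun u v (hu : r u v ∨ s u v) => hu.elim (hr u v) (hs u v)) a b hab
    rwa [he] at this
  have hba' : t b a := by
    have := Relation.TransGen.mono (fun u v (hu : r u v ∨ s u v) => hu.elim (hr u v) (hs u v)) b a hba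
    rwa [he] at this
  exact hanti a b hab' hba'

lemma not_compat {X : Type*} {r s : X → X → Prop} {a b : X}
    (hab : r a b) (hba : s b a) (hne : a ≠ b) : ¬ Compatible r s := fun h =>
  hne (h a b (.single (Or.inl hab)) (.single (Or.inr hba)))

lemma bracket_one {X : Type*} (S : Type*) [CommSemiring S] {r s : X → X → Prop}
    (h : Compatible r s) : bracket S r s = 1 := if_pos h

lemma bracket_zero {X : Type*} (S : Type*) [CommSemiring S] {r s : X → X → Prop}
    (h : ¬ Compatible r s) : bracket S r s = 0 := if_neg h

/-- the total order on `Bool` with `false < true` -/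
def myS1 : Bool → Bool → Prop := fun a b => a = b ∨ (a = false ∧ b = true)

/-- the total order on `Bool` with `true < false` -/
def myS2 : Bool → Bool → Prop := fun a b => a = b ∨ (a = true ∧ b = false)

lemma myS1_PO : IsPartialOrder Bool myS1 := by
  refine { refl := ?_, trans := ?_, antisymm := ?_ } <;> unfold myS1 <;> decide

lemma myS2_PO : IsPartialOrder Bool myS2 := by
  refine { refl := ?_, trans := ?_, antisymm := ?_ } <;> unfold myS2 <;> decide

theorem stmt13 {S : Type*} [CommSemiring S]
    (h : ∀ (X : Type) [Fintype X] (r : X → X → Prop), IsPartialOrder X r →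
      ∃ (n : ℕ) (t : Fin n → (X → X → Prop)) (lam : Fin n → S),
        (∀ i, IsLinearOrder X (t i)) ∧
        ∀ s : X → X → Prop, IsPartialOrder X s →
          bracket S r s = ∑ i, lam i * bracket S (t i) s) :
    (1 : S) + 1 = 1 := by
  classical
  have hEqPO : IsPartialOrder Bool (Eq : Bool → Bool → Prop) :=
    { refl := fun _ => rfl, trans := fun _ _ _ h1 h2 => h1.trans h2,
      antisymm := fun _ _ h1 _ => h1 }
  obtain ⟨n, t, lam, hlin, hb⟩ := h Bool Eq hEqPO
  have htrans : ∀ i, Transitive (t i) := fun i =>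
    (hlin i).toIsPartialOrder.toIsPreorder.toIsTrans.trans
  have hanti : ∀ i, ∀ a b, t i a b → t i b a → a = b := fun i =>
    (hlin i).toIsPartialOrder.toAntisymm.antisymm
  have hrefl : ∀ i, ∀ a, t i a a := fun i =>
    (hlin i).toIsPartialOrder.toIsPreorder.toRefl.refl
  have htot : ∀ i, ∀ a b, t i a b ∨ t i b a := fun i => (hlin i).toTotal.total
  -- brackets with Eq
  have hbEqEq : bracket S (Eq : Bool → Bool → Prop) Eq = 1 :=
    bracket_one S (compat_of (fun _ _ _ h1 h2 => h1.trans h2)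
      (fun _ _ h1 _ => h1) (fun _ _ h1 => h1) (fun _ _ h1 => h1))
  have hbtEq : ∀ i, bracket S (t i) Eq = 1 := fun i =>
    bracket_one S (compat_of (htrans i) (hanti i) (fun _ _ h1 => h1)
      (fun a b h1 => h1 ▸ hrefl i a))
  -- brackets with myS1 / myS2
  have hbEqS1 : bracket S (Eq : Bool → Bool → Prop) myS1 = 1 :=
    bracket_one S (compat_of (myS1_PO.toIsPreorder.toIsTrans.trans)
      (myS1_PO.toAntisymm.antisymm)
      (fun a b h1 => Or.inl h1) (fun _ _ h1 => h1))
  have hbEqS2 : bracket S (Eq : Bool → Bool → Prop) myS2 = 1 :=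
    bracket_one S (compat_of (myS2_PO.toIsPreorder.toIsTrans.trans)
      (myS2_PO.toAntisymm.antisymm)
      (fun a b h1 => Or.inl h1) (fun _ _ h1 => h1))
  have hbtS1 : ∀ i, bracket S (t i) myS1 = if t i false true then 1 else 0 := by
    intro i
    by_cases hp : t i false true
    · rw [if_pos hp]
      refine bracket_one S (compat_of (htrans i) (hanti i) (fun _ _ h1 => h1) ?_)
      rintro a b (rfl | ⟨rfl, rfl⟩)
      · exact hrefl i a
      · exact hp
    · rw [if_neg hp]
      have hba : t i true false := (htot i false true).resolve_left hp
      exact bracket_zero S (not_compat hba (Or.inr ⟨rfl, rfl⟩) (by simp))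
  have hbtS2 : ∀ i, bracket S (t i) myS2 = if t i false true then 0 else 1 := by
    intro i
    by_cases hp : t i false true
    · rw [if_pos hp]
      exact bracket_zero S (not_compat hp (Or.inr ⟨rfl, rfl⟩) (by simp))
    · rw [if_neg hp]
      have hba : t i true false := (htot i false true).resolve_left hp
      refine bracket_one S (compat_of (htrans i) (hanti i) (fun _ _ h1 => h1) ?_)
      rintro a b (rfl | ⟨rfl, rfl⟩)
      · exact hrefl i a
      · exact hba
  -- the three equations
  have eq1 : (1 : S) = ∑ i, lam i := by
    have := hb Eq hEqPO
    rw [hbEqEq] at this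
    simpa [hbtEq] using this
  have eq2 : (1 : S) = ∑ i, lam i * (if t i false true then 1 else 0) := by
    have := hb myS1 myS1_PO
    rw [hbEqS1] at this
    simpa [hbtS1] using this
  have eq3 : (1 : S) = ∑ i, lam i * (if t i false true then 0 else 1) := by
    have := hb myS2 myS2_PO
    rw [hbEqS2] at this
    simpa [hbtS2] using this
  have key : ∀ i, lam i * (if t i false true then (1:S) else 0) +
      lam i * (if t i false true then (0:S) else 1) = lam i := by
    intro i
    by_cases hp : t i false true <;> simp [hp]
  calc (1 : S) + 1
      = ∑ i, lam i * (if t i false true then (1:S) else 0) +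
        ∑ i, lam i * (if t i false true then (0:S) else 1) := by rw [← eq2, ← eq3]
    _ = ∑ i, (lam i * (if t i false true then (1:S) else 0) +
        lam i * (if t i false true then (0:S) else 1)) := by
          rw [Finset.sum_add_distrib]
    _ = ∑ i, lam i := by simp only [key]
    _ = 1 := eq1.symm
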